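/- Let X₁, X₂ ⊆ ℝ^d be nonempty compact convex sets, let h : ℝ^d → ℝ be strictly convex and differentiable, define the cost c(x₁, x₂) = h(x₁ − x₂), let g : X₂ → ℝ be continuous, and set f(x₁) = inf_{x₂ ∈ X₂} [c(x₁, x₂) − g(x₂)]. Suppose x₁ is a point of the interior of X₁ at which f is differentiable, and suppose y₀ ∈ X₂ is a minimizer of y ↦ c(x₁, y) − g(y) over X₂ lying in the interior of X₂. Then ∇h(x₁ − y₀) = ∇f(x₁), and y₀ is the unique minimizer of y ↦ c(x₁, y) − g(y) over X₂; in other words, y₀ = x₁ − (∇h)⁻¹(∇f(x₁)) is the unique pre-image of x₁ under the c-superdifferential of g. -/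

import Mathlib

/-- Injectivity of the Fréchet derivative of a strictly convex differentiable function. -/
lemma fderiv_injective_of_strictConvexOn {d : ℕ}
    (h : EuclideanSpace ℝ (Fin d) → ℝ)
    (hconv : StrictConvexOn ℝ Set.univ h) (hdiff : Differentiable ℝ h)
    {a b : EuclideanSpace ℝ (Fin d)} (hab : fderiv ℝ h a = fderiv ℝ h b) : a = b := by
  by_contra hne
  set v := b - a with hv
  have hv0 : v ≠ 0 := sub_ne_zero.2 (Ne.symm hne)
  set q : ℝ → ℝ := fun t => h (a + t • v) with hq
  have hline : ∀ t : ℝ, HasDerivAt q (fderiv ℝ h (a + t • v) v) t := by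
    intro t
    have h1 : HasDerivAt (fun t : ℝ => a + t • v) v t := by
      simpa using ((hasDerivAt_id t).smul_const v).const_add a
    exact (hdiff (a + t • v)).hasFDerivAt.comp_hasDerivAt t h1
  have hqconv : StrictConvexOn ℝ Set.univ q := by
    refine ⟨convex_univ, fun s _ t _ hst σ τ hσ hτ hστ => ?_⟩
    have hpt : a + s • v ≠ a + t • v := by
      intro hcon
      apply hst
      have h2 : (s - t) • v = 0 := by
        rw [sub_smul, add_left_cancel hcon, sub_self]
      rcases smul_eq_zero.1 h2 with h3 | h3
      · linarith [sub_eq_zero.1 (by exact h3)]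
      · exact absurd h3 hv0
    have ha : σ • a + τ • a = a := by rw [← add_smul, hστ, one_smul]
    have key : σ • (a + s • v) + τ • (a + t • v) = a + (σ • s + τ • t) • v := by
      rw [smul_add, smul_add, add_smul, smul_assoc, smul_assoc, add_add_add_comm, ha]
    have hlt := hconv.2 (Set.mem_univ (a + s • v)) (Set.mem_univ (a + t • v)) hpt hσ hτ hστ
    show h (a + (σ • s + τ • t) • v) < σ • h (a + s • v) + τ • h (a + t • v)
    rw [← key]
    exact hlt
  have hmono := hqconv.strictMonoOn_deriv (fun x _ => (hline x).differentiableAt)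
  have h0 : deriv q 0 = fderiv ℝ h a v := by
    simpa using (hline 0).deriv
  have h1 : deriv q 1 = fderiv ℝ h b v := by
    have := (hline 1).deriv
    rw [this]
    congr 1
    simp [hv]
  have hlt := hmono (Set.mem_univ (0 : ℝ)) (Set.mem_univ (1 : ℝ)) one_pos
  rw [h0, h1, hab] at hlt
  exact lt_irrefl _ hlt

theorem stmt5 {d : ℕ} (X₁ X₂ : Set (EuclideanSpace ℝ (Fin d)))
    (hX₁ne : X₁.Nonempty) (hX₂ne : X₂.Nonempty)
    (hX₁c : IsCompact X₁) (hX₂c : IsCompact X₂)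
    (hX₁conv : Convex ℝ X₁) (hX₂conv : Convex ℝ X₂)
    (h : EuclideanSpace ℝ (Fin d) → ℝ)
    (hconv : StrictConvexOn ℝ Set.univ h) (hdiff : Differentiable ℝ h)
    (g : EuclideanSpace ℝ (Fin d) → ℝ) (hg : ContinuousOn g X₂)
    (x₁ : EuclideanSpace ℝ (Fin d)) (hx₁ : x₁ ∈ interior X₁)
    (hfd : DifferentiableAt ℝ (fun x => ⨅ y : X₂, (h (x - y) - g y)) x₁)
    (y₀ : EuclideanSpace ℝ (Fin d)) (hy₀ : y₀ ∈ interior X₂)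
    (hy₀min : ∀ y ∈ X₂, h (x₁ - y₀) - g y₀ ≤ h (x₁ - y) - g y) :
    gradient h (x₁ - y₀) = gradient (fun x => ⨅ y : X₂, (h (x - y) - g y)) x₁ ∧
    (∀ y ∈ X₂, (∀ y' ∈ X₂, h (x₁ - y) - g y ≤ h (x₁ - y') - g y') → y = y₀) := by
  set f : EuclideanSpace ℝ (Fin d) → ℝ := fun x => ⨅ y : X₂, (h (x - y) - g y) with hf
  have hy₀X₂ : y₀ ∈ X₂ := interior_subset hy₀
  haveI : Nonempty ↑X₂ := hX₂ne.to_subtype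
  have hbdd : ∀ x, BddBelow (Set.range fun y : X₂ => h (x - y) - g y) := by
    intro x
    have hcont : ContinuousOn (fun y => h (x - y) - g y) X₂ :=
      ((hdiff.continuous.comp (continuous_const.sub continuous_id)).continuousOn).sub hg
    have himg : IsCompact ((fun y => h (x - y) - g y) '' X₂) :=
      hX₂c.image_of_continuousOn hcont
    have hrange : (Set.range fun y : X₂ => h (x - y) - g y)
        = (fun y => h (x - y) - g y) '' X₂ := by
      rw [show (fun y : X₂ => h (x - y) - g y)
            = (fun y => h (x - y) - g y) ∘ Subtype.val from rfl,
          Set.range_comp, Subtype.range_coe]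
    rw [hrange]
    exact himg.bddBelow
  have hle : ∀ x, ∀ y ∈ X₂, f x ≤ h (x - y) - g y := fun x y hy =>
    ciInf_le (hbdd x) ⟨y, hy⟩
  have hfx₁ : f x₁ = h (x₁ - y₀) - g y₀ :=
    le_antisymm (hle x₁ y₀ hy₀X₂) (le_ciInf fun y => hy₀min y y.2)
  have key : ∀ y ∈ X₂, h (x₁ - y) - g y = f x₁ →
      fderiv ℝ h (x₁ - y) = fderiv ℝ f x₁ := by
    intro y hy heq
    set φ : EuclideanSpace ℝ (Fin d) → ℝ := fun x => h (x - y) - g y - f x with hφ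
    have hmin : IsLocalMin φ x₁ := by
      apply Filter.Eventually.of_forall
      intro x
      have h1 : φ x₁ = 0 := by simp [hφ, heq]
      have h2 : 0 ≤ φ x := sub_nonneg.2 (hle x y hy)
      rw [h1]; exact h2
    have hH : HasFDerivAt (fun x => h (x - y)) (fderiv ℝ h (x₁ - y)) x₁ := by
      have := (hdiff (x₁ - y)).hasFDerivAt.comp x₁ ((hasFDerivAt_id x₁).sub_const y)
      simpa [Function.comp_def] using this
    have hφd : HasFDerivAt φ (fderiv ℝ h (x₁ - y) - fderiv ℝ f x₁) x₁ :=
      (hH.sub_const (g y)).sub hfd.hasFDerivAt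
    have hzero := hmin.fderiv_eq_zero
    rw [hφd.fderiv] at hzero
    exact sub_eq_zero.1 hzero
  have key₀ : fderiv ℝ h (x₁ - y₀) = fderiv ℝ f x₁ := key y₀ hy₀X₂ hfx₁.symm
  constructor
  · show gradient h (x₁ - y₀) = gradient f x₁
    unfold gradient
    rw [key₀]
  · intro y hy hmin
    have hval : h (x₁ - y) - g y = f x₁ := by
      rw [hfx₁]
      exact le_antisymm (hmin y₀ hy₀X₂) (hy₀min y hy)
    have := (key y hy hval).trans key₀.symm
    have := fderiv_injective_of_strictConvexOn h hconv hdiff this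
    exact sub_right_injective this
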